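/- Let N ≥ 1, let p = (p_i^j) be an N×N matrix with all entries strictly positive, and define the Bethe free energy F_BP(β) = Σ_{i,j} ( β_i^j ln(β_i^j/p_i^j) − (1 − β_i^j) ln(1 − β_i^j) ) on matrices β with entries in (0,1). Suppose β, with all entries in (0,1), is a local extremum of F_BP restricted to the affine set of matrices satisfying Σ_j β_i^j = 1 for all i and Σ_i β_i^j = 1 for all j. Then there exist real numbers μ_1, …, μ_N and μ^1, …, μ^N such that β_i^j (1 − β_i^j) = p_i^j exp(μ_i + μ^j) for all i, j. -/

import Mathlib

open Real Finset

/-- Derivative of the per-entry Bethe term along an affine line. -/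
lemma bethe_term_hasDerivAt (c x0 m : ℝ) (hx0 : 0 < x0) (hx1 : x0 < 1) (hc : 0 < c) :
    HasDerivAt (fun t : ℝ =>
        (x0 + t * m) * Real.log ((x0 + t * m) / c)
          - (1 - (x0 + t * m)) * Real.log (1 - (x0 + t * m)))
      (m * (Real.log (x0 / c) + Real.log (1 - x0) + 2)) 0 := by
  have hu : HasDerivAt (fun t : ℝ => x0 + t * m) m 0 := by
    simpa using ((hasDerivAt_id (0:ℝ)).mul_const m).const_add x0
  have hu0 : x0 + (0:ℝ) * m = x0 := by ring
  have hne : (x0 + (0:ℝ) * m) / c ≠ 0 := by rw [hu0]; positivity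
  have h1ne : (1:ℝ) - (x0 + (0:ℝ) * m) ≠ 0 := by rw [hu0]; linarith
  have hlogt : HasDerivAt (fun t : ℝ => Real.log ((x0 + t * m) / c))
      ((m / c) / ((x0 + (0:ℝ) * m) / c)) 0 := (hu.div_const c).log hne
  have hf1 : HasDerivAt (fun t : ℝ => (x0 + t * m) * Real.log ((x0 + t * m) / c))
      (m * Real.log ((x0 + (0:ℝ) * m) / c)
        + (x0 + (0:ℝ) * m) * ((m / c) / ((x0 + (0:ℝ) * m) / c))) 0 := hu.mul hlogt
  have h1u : HasDerivAt (fun t : ℝ => 1 - (x0 + t * m)) (-m) 0 := hu.const_sub 1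
  have hlog2 : HasDerivAt (fun t : ℝ => Real.log (1 - (x0 + t * m)))
      ((-m) / (1 - (x0 + (0:ℝ) * m))) 0 := h1u.log h1ne
  have hf2 : HasDerivAt (fun t : ℝ => (1 - (x0 + t * m)) * Real.log (1 - (x0 + t * m)))
      ((-m) * Real.log (1 - (x0 + (0:ℝ) * m))
        + (1 - (x0 + (0:ℝ) * m)) * ((-m) / (1 - (x0 + (0:ℝ) * m)))) 0 := h1u.mul hlog2
  have hf := hf1.sub hf2
  refine hf.congr_deriv ?_
  rw [hu0]
  have hxne : x0 ≠ 0 := ne_of_gt hx0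
  have hcne : c ≠ 0 := ne_of_gt hc
  have h1x : (1:ℝ) - x0 ≠ 0 := by linarith
  field_simp
  ring

theorem bethe_stationarity (N : ℕ) (hN : 1 ≤ N)
    (p : Fin N → Fin N → ℝ) (hp : ∀ i j, 0 < p i j)
    (β : Fin N → Fin N → ℝ) (hβ : ∀ i j, β i j ∈ Set.Ioo (0 : ℝ) 1)
    (hrow : ∀ i, ∑ j, β i j = 1) (hcol : ∀ j, ∑ i, β i j = 1)
    (hextr : IsLocalExtrOn
      (fun b : Fin N → Fin N → ℝ => ∑ i, ∑ j,
        (b i j * Real.log (b i j / p i j) - (1 - b i j) * Real.log (1 - b i j)))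
      {b : Fin N → Fin N → ℝ |
        (∀ i, ∑ j, b i j = 1) ∧ (∀ j, ∑ i, b i j = 1)} β) :
    ∃ μL μR : Fin N → ℝ, ∀ i j,
      β i j * (1 - β i j) = p i j * Real.exp (μL i + μR j) := by
  set S : Set (Fin N → Fin N → ℝ) := {b : Fin N → Fin N → ℝ |
        (∀ i, ∑ j, b i j = 1) ∧ (∀ j, ∑ i, b i j = 1)} with hS
  set g : Fin N → Fin N → ℝ := fun a b =>
    Real.log (β a b / p a b) + Real.log (1 - β a b) + 2 with hg
  -- rectangle relation for g
  have hrect : ∀ i i' j j' : Fin N, g i j - g i j' - (g i' j - g i' j') = 0 := by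
    intro i i' j j'
    set r : Fin N → ℝ := fun a => (if a = i then (1:ℝ) else 0) - (if a = i' then 1 else 0)
      with hrdef
    set c : Fin N → ℝ := fun b => (if b = j then (1:ℝ) else 0) - (if b = j' then 1 else 0)
      with hcdef
    set γ : ℝ → Fin N → Fin N → ℝ := fun t a b => β a b + t * (r a * c b) with hγ
    have hcsum : ∑ b, c b = 0 := by
      simp [hcdef, Finset.sum_sub_distrib]
    have hrsum : ∑ a, r a = 0 := by
      simp [hrdef, Finset.sum_sub_distrib]
    have hmem : ∀ t : ℝ, γ t ∈ S := by
      intro t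
      constructor
      · intro a
        show ∑ b, (β a b + t * (r a * c b)) = 1
        rw [Finset.sum_add_distrib,
          Finset.sum_congr rfl (fun b' _ => show t * (r a * c b') = (t * r a) * c b' by ring),
          ← Finset.mul_sum, hcsum, hrow a]
        ring
      · intro b
        show ∑ a, (β a b + t * (r a * c b)) = 1
        rw [Finset.sum_add_distrib,
          Finset.sum_congr rfl (fun a' _ => show t * (r a' * c b) = (t * c b) * r a' by ring),
          ← Finset.mul_sum, hrsum, hcol b]
        ring
    have hγ0 : γ 0 = β := by funext a b; simp [hγ]
    have htend : Filter.Tendsto γ (nhds 0) (nhdsWithin β S) := by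
      rw [tendsto_nhdsWithin_iff]
      constructor
      · have : Continuous γ := by
          apply continuous_pi; intro a; apply continuous_pi; intro b
          exact continuous_const.add (continuous_id.mul continuous_const)
        simpa [hγ0] using this.tendsto 0
      · exact Filter.Eventually.of_forall hmem
    have hextr' : IsLocalExtrOn
        (fun b : Fin N → Fin N → ℝ => ∑ i, ∑ j,
          (b i j * Real.log (b i j / p i j) - (1 - b i j) * Real.log (1 - b i j)))
        S (γ 0) := by rwa [hγ0]
    have hφextr : IsLocalExtr (fun t => ∑ a, ∑ b,
        (γ t a b * Real.log (γ t a b / p a b)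
          - (1 - γ t a b) * Real.log (1 - γ t a b))) 0 := by
      have := IsExtrFilter.comp_tendsto hextr' (by rwa [hγ0])
      exact this
    have hD : HasDerivAt (fun t => ∑ a, ∑ b,
        (γ t a b * Real.log (γ t a b / p a b)
          - (1 - γ t a b) * Real.log (1 - γ t a b)))
        (∑ a, ∑ b, (r a * c b) * g a b) 0 := by
      apply HasDerivAt.fun_sum
      intro a _
      apply HasDerivAt.fun_sum
      intro b _
      exact bethe_term_hasDerivAt (p a b) (β a b) (r a * c b)
        (hβ a b).1 (hβ a b).2 (hp a b)
    have hzero : ∑ a, ∑ b, (r a * c b) * g a b = 0 := hφextr.hasDerivAt_eq_zero hD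
    have hinner : ∀ a, ∑ b, (r a * c b) * g a b = r a * (g a j - g a j') := by
      intro a
      have e : ∀ b, (r a * c b) * g a b
          = r a * ((if b = j then g a b else 0) - (if b = j' then g a b else 0)) := by
        intro b; simp only [hcdef]; split_ifs <;> ring
      rw [Finset.sum_congr rfl fun b _ => e b, ← Finset.mul_sum,
        Finset.sum_sub_distrib, Finset.sum_ite_eq', Finset.sum_ite_eq']
      simp
    have houter : ∑ a, r a * (g a j - g a j')
        = (g i j - g i j') - (g i' j - g i' j') := by
      have e : ∀ a, r a * (g a j - g a j')
          = (if a = i then g a j - g a j' else 0) - (if a = i' then g a j - g a j' else 0) := by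
        intro a; simp only [hrdef]; split_ifs <;> ring
      rw [Finset.sum_congr rfl fun a _ => e a, Finset.sum_sub_distrib,
        Finset.sum_ite_eq', Finset.sum_ite_eq']
      simp
    rw [Finset.sum_congr rfl fun a _ => hinner a, houter] at hzero
    exact hzero
  set h : Fin N → Fin N → ℝ := fun a b =>
    Real.log (β a b) + Real.log (1 - β a b) - Real.log (p a b) with hh
  have hgh : ∀ a b, g a b = h a b + 2 := by
    intro a b
    have := Real.log_div (ne_of_gt (hβ a b).1) (ne_of_gt (hp a b))
    simp only [hg, hh, this]; ring
  have hrecth : ∀ i j, h i j = h i ⟨0, hN⟩ + (h ⟨0, hN⟩ j - h ⟨0, hN⟩ ⟨0, hN⟩) := by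
    intro i j
    have := hrect i ⟨0, hN⟩ j ⟨0, hN⟩
    simp only [hgh] at this
    linarith
  refine ⟨fun i => h i ⟨0, hN⟩, fun j => h ⟨0, hN⟩ j - h ⟨0, hN⟩ ⟨0, hN⟩, fun i j => ?_⟩
  have h0 : (0:ℝ) < β i j := (hβ i j).1
  have h1 : (0:ℝ) < 1 - β i j := by linarith [(hβ i j).2]
  rw [← hrecth i j]
  have he : Real.exp (h i j) = β i j * (1 - β i j) / p i j := by
    rw [hh]
    rw [Real.exp_sub, Real.exp_add, Real.exp_log h0, Real.exp_log h1,
      Real.exp_log (hp i j)]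
  rw [he, mul_div_cancel₀ _ (ne_of_gt (hp i j))]
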